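/- A Polish group G is non-archimedean if and only if there exists an injective group homomorphism from G into the group Homeo({0,1}^ℕ) of all self-homeomorphisms of the Cantor space, equipped with the compact-open topology, which is a homeomorphism onto its image. -/

import Mathlib

/-- The Cantor space `{0,1}^ℕ` with the product topology. -/
abbrev CantorSpace : Type := ℕ → Bool

/-- The group of self-homeomorphisms of the Cantor space, under composition. -/
instance : Group (CantorSpace ≃ₜ CantorSpace) where
  mul f g := g.trans f
  one := Homeomorph.refl _
  inv := Homeomorph.symm
  mul_assoc f g h := Homeomorph.ext fun _ => rfl
  one_mul f := Homeomorph.ext fun _ => rfl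
  mul_one f := Homeomorph.ext fun _ => rfl
  inv_mul_cancel f := Homeomorph.ext fun x => f.symm_apply_apply x

open Topology Filter Set TopologicalSpace

namespace Stmt8


/-- cylinders -/
def cyl (k : ℕ) (x : CantorSpace) : Set CantorSpace := {y | ∀ m, m < k → y m = x m}

lemma isOpen_cyl (k : ℕ) (x : CantorSpace) : IsOpen (cyl k x) := by
  have h : cyl k x = ⋂ m ∈ Finset.range k, (fun y : CantorSpace => y m) ⁻¹' {x m} := by
    ext y; simp [cyl, Finset.mem_range]
  rw [h]
  exact isOpen_biInter_finset fun m _ =>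
    (isOpen_discrete {x m}).preimage (continuous_apply m)

lemma exists_cyl_subset {K U : Set CantorSpace} (hK : IsCompact K) (hU : IsOpen U)
    (hKU : K ⊆ U) : ∃ k, ∀ x ∈ K, cyl k x ⊆ U := by
  set W : ℕ → Set CantorSpace := fun k => {x | cyl k x ⊆ U} with hW
  have Wmono : ∀ {k k'}, k ≤ k' → W k ⊆ W k' := by
    intro k k' hkk x hx y hy
    exact hx fun m hm => hy m (lt_of_lt_of_le hm hkk)
  have Wopen : ∀ k, IsOpen (W k) := by
    intro k
    rw [isOpen_iff_forall_mem_open]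
    intro x hx
    exact ⟨cyl k x, fun y hy z hz => hx fun m hm => (hz m hm).trans (hy m hm),
      isOpen_cyl k x, fun m _ => rfl⟩
  have cover : K ⊆ ⋃ k, W k := by
    intro x hx
    obtain ⟨I, u, hu, hsub⟩ := isOpen_pi_iff.1 hU x (hKU hx)
    refine mem_iUnion.2 ⟨I.sup id + 1, fun y hy => hsub fun i hi => ?_⟩
    have hyx : y i = x i := hy i (Nat.lt_succ_of_le (Finset.le_sup (f := id) (Finset.mem_coe.1 hi)))
    rw [hyx]; exact (hu i (Finset.mem_coe.1 hi)).2
  obtain ⟨t, ht⟩ := hK.elim_finite_subcover W Wopen cover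
  refine ⟨t.sup id, fun x hx => ?_⟩
  obtain ⟨i, hi, hxi⟩ := mem_iUnion₂.1 (ht hx)
  exact Wmono (Finset.le_sup (f := id) hi) hxi

lemma compactOpen_base {O : Set C(CantorSpace, CantorSpace)} (hO : IsOpen O) :
    ∀ F₀ ∈ O, ∃ k, ∀ F : C(CantorSpace, CantorSpace),
      (∀ x m, m < k → F x m = F₀ x m) → F ∈ O := by
  have h : TopologicalSpace.GenerateOpen
      (Set.image2 (fun K U => {f : C(CantorSpace, CantorSpace) | Set.MapsTo f K U})
        {K | IsCompact K} {U | IsOpen U}) O := hO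
  induction h with
  | basic s hs =>
      obtain ⟨K, hK, U, hU, rfl⟩ := hs
      intro F₀ hF₀
      obtain ⟨k, hk⟩ := exists_cyl_subset (hK.image F₀.continuous) hU
        (Set.MapsTo.image_subset hF₀)
      exact ⟨k, fun F hF x hx =>
        hk (F₀ x) (Set.mem_image_of_mem _ hx) fun m hm => hF x m hm⟩
  | univ => exact fun F₀ _ => ⟨0, fun F _ => trivial⟩
  | inter s t hgs hgt ihs iht =>
      intro F₀ hF₀
      obtain ⟨k1, h1⟩ := ihs hgs F₀ hF₀.1
      obtain ⟨k2, h2⟩ := iht hgt F₀ hF₀.2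
      exact ⟨max k1 k2,
        fun F hF => ⟨h1 F fun x m hm => hF x m (lt_of_lt_of_le hm (le_max_left _ _)),
          h2 F fun x m hm => hF x m (lt_of_lt_of_le hm (le_max_right _ _))⟩⟩
  | sUnion S hgS ih =>
      rintro F₀ ⟨s, hs, hF₀⟩
      obtain ⟨k, hk⟩ := ih s hs (hgS s hs) F₀ hF₀
      exact ⟨k, fun F hF => ⟨s, hs, hk F hF⟩⟩




lemma mul_apply' (f g : CantorSpace ≃ₜ CantorSpace) (x : CantorSpace) :
    (f * g) x = f (g x) := rfl

lemma one_apply' (x : CantorSpace) : (1 : CantorSpace ≃ₜ CantorSpace) x = x := rfl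

lemma inv_eq_symm (f : CantorSpace ≃ₜ CantorSpace) : f⁻¹ = f.symm := rfl

/-- Pointwise stabilizer of the first `k` coordinates. -/
def fix (k : ℕ) : Subgroup (CantorSpace ≃ₜ CantorSpace) where
  carrier := {f | ∀ x m, m < k → f x m = x m}
  one_mem' := fun _ _ _ => rfl
  mul_mem' := by
    intro f g hf hg x m hm
    rw [mul_apply', hf (g x) m hm, hg x m hm]
  inv_mem' := by
    intro f hf x m hm
    have h1 : f (f⁻¹ x) = x := by rw [inv_eq_symm]; exact f.apply_symm_apply x
    have h2 := hf (f⁻¹ x) m hm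
    rw [h1] at h2
    exact h2.symm

lemma isOpen_fixSet (k : ℕ) :
    IsOpen {F : C(CantorSpace, CantorSpace) | ∀ x m, m < k → F x m = x m} := by
  have h : {F : C(CantorSpace, CantorSpace) | ∀ x m, m < k → F x m = x m}
      = ⋂ m ∈ Finset.range k, ⋂ b : Bool,
        {F : C(CantorSpace, CantorSpace) | Set.MapsTo F {x | x m = b} {x | x m = b}} := by
    ext F
    simp only [Set.mem_iInter, Finset.mem_range, Set.mem_setOf_eq]
    constructor
    · intro h m hm b x hx
      show F x m = b
      rw [h x m hm]; exact hx
    · intro h x m hm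
      exact h m hm (x m) rfl
  rw [h]
  refine isOpen_biInter_finset fun m _ => isOpen_iInter_of_finite fun b => ?_
  have hKc : IsCompact {x : CantorSpace | x m = b} :=
    IsClosed.isCompact (isClosed_eq (continuous_apply m) continuous_const)
  have hKo : IsOpen {x : CantorSpace | x m = b} := by
    have : IsOpen ((fun x : CantorSpace => x m) ⁻¹' {b}) :=
      (isOpen_discrete ({b} : Set Bool)).preimage (continuous_apply m)
    simpa [Set.preimage, Set.mem_singleton_iff] using this
  exact ContinuousMap.isOpen_setOf_mapsTo hKc hKo

/-- Coordinate-permuting homeomorphism of the Cantor space. -/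
def homeoOfPerm (s : Equiv.Perm ℕ) : CantorSpace ≃ₜ CantorSpace where
  toFun x := fun m => x (s.symm m)
  invFun x := fun m => x (s m)
  left_inv x := funext fun m => by simp
  right_inv x := funext fun m => by simp
  continuous_toFun := continuous_pi fun m => continuous_apply _
  continuous_invFun := continuous_pi fun m => continuous_apply _

def homeoHom : Equiv.Perm ℕ →* (CantorSpace ≃ₜ CantorSpace) where
  toFun := homeoOfPerm
  map_one' := Homeomorph.ext fun x => rfl
  map_mul' s t := Homeomorph.ext fun x => funext fun m => by
    show x ((s * t)⁻¹ m) = x (t⁻¹ (s⁻¹ m))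
    rw [mul_inv_rev, Equiv.Perm.mul_apply]

/-- Conjugation of permutation groups by an equivalence, as a monoid hom. -/
def permCongrHom {α β : Type*} (e : α ≃ β) : Equiv.Perm α →* Equiv.Perm β where
  toFun p := (e.symm.trans p).trans e
  map_one' := by ext n; simp
  map_mul' p q := by ext n; simp


def tH : TopologicalSpace (CantorSpace ≃ₜ CantorSpace) :=
  TopologicalSpace.induced
    (fun f : CantorSpace ≃ₜ CantorSpace => (⟨⇑f, f.continuous⟩ : C(CantorSpace, CantorSpace)))
    ContinuousMap.compactOpen

theorem backward {G : Type} [Group G] [TopologicalSpace G]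
    (φ : G →* (CantorSpace ≃ₜ CantorSpace)) (hemb : @Topology.IsEmbedding _ _ _ tH ⇑φ) :
    ∀ U ∈ nhds (1 : G), ∃ H : Subgroup G, IsOpen (H : Set G) ∧ (H : Set G) ⊆ U := by
  letI := tH
  intro U hU
  set ι : (CantorSpace ≃ₜ CantorSpace) → C(CantorSpace, CantorSpace) :=
    fun f => ⟨⇑f, f.continuous⟩ with hι
  have hcont : Continuous ⇑φ := hemb.continuous
  have hn : 𝓝 (1 : G) = Filter.comap ⇑φ (𝓝 (φ 1)) := isInducing_iff_nhds.1 hemb.toIsInducing 1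
  rw [hn, map_one] at hU
  obtain ⟨M, hM, hMU⟩ := Filter.mem_comap.1 hU
  have hn2 : (𝓝 (1 : CantorSpace ≃ₜ CantorSpace)) = Filter.comap ι (𝓝 (ι 1)) := nhds_induced ι 1
  rw [hn2] at hM
  obtain ⟨N, hN, hNM⟩ := Filter.mem_comap.1 hM
  obtain ⟨O, hON, hOopen, hO1⟩ := mem_nhds_iff.1 hN
  obtain ⟨k, hk⟩ := compactOpen_base hOopen (ι 1) hO1
  refine ⟨(fix k).comap φ, ?_, ?_⟩
  · have hset : ((fix k).comap φ : Set G)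
        = ⇑φ ⁻¹' (ι ⁻¹' {F : C(CantorSpace, CantorSpace) | ∀ x m, m < k → F x m = x m}) := rfl
    rw [hset]
    exact ((isOpen_fixSet k).preimage continuous_induced_dom).preimage hcont
  · intro g hg
    have hgfix : ∀ x m, m < k → (φ g) x m = x m := hg
    have hO : ι (φ g) ∈ O := hk (ι (φ g)) (fun x m hm => hgfix x m hm)
    exact hMU (hNM (hON hO))

section Forward

variable {G : Type} [Group G] [TopologicalSpace G] [IsTopologicalGroup G] [T1Space G]

theorem forward (B : ℕ → Set G) (hB : (𝓝 (1 : G)).HasBasis (fun _ : ℕ => True) B)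
    (H : ℕ → Subgroup G) (hHopen : ∀ j, IsOpen (H j : Set G))
    (hHsub : ∀ j, (H j : Set G) ⊆ B j)
    (e : (Σ j : ℕ, G ⧸ H j) ≃ ℕ) :
    ∃ φ : G →* (CantorSpace ≃ₜ CantorSpace),
      Function.Injective ⇑φ ∧ @Topology.IsEmbedding _ _ _ tH ⇑φ := by
  classical
  letI := tH
  set A := (Σ j : ℕ, G ⧸ H j) with hA
  letI actA : MulAction G A :=
    { smul := fun g p => ⟨p.1, g • p.2⟩
      one_smul := by rintro ⟨j, q⟩; show (⟨j, (1 : G) • q⟩ : A) = ⟨j, q⟩; rw [one_smul]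
      mul_smul := by
        intro g h
        rintro ⟨j, q⟩
        show (⟨j, (g * h) • q⟩ : A) = ⟨j, g • h • q⟩
        rw [mul_smul] }
  set φ : G →* (CantorSpace ≃ₜ CantorSpace) :=
    homeoHom.comp ((permCongrHom e).comp (MulAction.toPermHom G A)) with hφ
  have key : ∀ (g : G) (x : CantorSpace) (m : ℕ),
      (φ g) x m = x (e ⟨(e.symm m).1, g⁻¹ • (e.symm m).2⟩) := by
    intro g x m
    rfl
  -- openness of the sets where a quotient translate is constant
  have hopen_smul : ∀ (j : ℕ) (q q' : G ⧸ H j), IsOpen {g : G | g⁻¹ • q = q'} := by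
    intro j q q'
    refine QuotientGroup.induction_on q fun a => QuotientGroup.induction_on q' fun b => ?_
    have hset : {g : G | g⁻¹ • ((a : G ⧸ H j)) = (b : G ⧸ H j)}
        = (fun g : G => (g⁻¹ * a)⁻¹ * b) ⁻¹' (H j : Set G) := by
      ext g
      show (g⁻¹ • ((a : G ⧸ H j)) = (b : G ⧸ H j)) ↔ _
      rw [show g⁻¹ • ((a : G ⧸ H j)) = ((g⁻¹ * a : G) : G ⧸ H j) from rfl,
        QuotientGroup.eq]
      rfl
    rw [hset]
    exact (hHopen j).preimage (by fun_prop)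
  -- local constancy of the permutation coordinates
  have hcm : ∀ m : ℕ, ∀ g₀ : G, ∀ᶠ g in 𝓝 g₀,
      e ⟨(e.symm m).1, g⁻¹ • (e.symm m).2⟩ = e ⟨(e.symm m).1, g₀⁻¹ • (e.symm m).2⟩ := by
    intro m g₀
    filter_upwards [(hopen_smul (e.symm m).1 (e.symm m).2
      (g₀⁻¹ • (e.symm m).2)).mem_nhds rfl] with g hg
    rw [show g⁻¹ • (e.symm m).2 = g₀⁻¹ • (e.symm m).2 from hg]
  -- joint continuity of the action on the Cantor space
  have hu : Continuous fun p : G × CantorSpace => ⇑(φ p.1) p.2 := by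
    have hrw : (fun p : G × CantorSpace => ⇑(φ p.1) p.2)
        = fun p : G × CantorSpace =>
            (fun m => p.2 (e ⟨(e.symm m).1, p.1⁻¹ • (e.symm m).2⟩)) := by
      funext p
      funext m
      exact key p.1 p.2 m
    rw [hrw]
    refine continuous_pi fun m => ?_
    rw [continuous_iff_continuousAt]
    rintro ⟨g₀, x₀⟩
    have hev : ∀ᶠ p : G × CantorSpace in 𝓝 (g₀, x₀),
        p.2 (e ⟨(e.symm m).1, p.1⁻¹ • (e.symm m).2⟩)
          = p.2 (e ⟨(e.symm m).1, g₀⁻¹ • (e.symm m).2⟩) := by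
      rw [nhds_prod_eq]
      filter_upwards [(hcm m g₀).prod_inl (𝓝 x₀)] with p hp
      rw [hp]
    have hc0 : ContinuousAt
        (fun p : G × CantorSpace => p.2 (e ⟨(e.symm m).1, g₀⁻¹ • (e.symm m).2⟩)) (g₀, x₀) :=
      ((continuous_apply _).comp continuous_snd).continuousAt
    exact hc0.congr (Filter.EventuallyEq.symm hev)
  -- continuity of the map into C(Cantor, Cantor)
  have hψcont : Continuous (fun g : G =>
      (⟨⇑(φ g), (φ g).continuous⟩ : C(CantorSpace, CantorSpace))) :=
    (ContinuousMap.curry ⟨fun p : G × CantorSpace => ⇑(φ p.1) p.2, hu⟩).continuous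
  -- injectivity
  have hinj : Function.Injective ⇑φ := by
    refine (injective_iff_map_eq_one φ).2 fun g hg => ?_
    have hfix : ∀ j : ℕ, ∀ q : G ⧸ H j, g⁻¹ • q = q := by
      intro j q
      have hsymm : e.symm (e ⟨j, q⟩) = ⟨j, q⟩ := e.symm_apply_apply _
      have h1 : (φ g) (fun n => decide (n = e ⟨j, q⟩)) (e ⟨j, q⟩)
          = (fun n : ℕ => decide (n = e ⟨j, q⟩)) (e ⟨j, q⟩) := by rw [hg]; rfl
      rw [key] at h1
      rw [hsymm] at h1
      have h2 : e ⟨j, g⁻¹ • q⟩ = e ⟨j, q⟩ := by simpa using h1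
      have h3 := e.injective h2
      rw [Sigma.mk.inj_iff] at h3
      exact eq_of_heq h3.2
    have hmem : ∀ j, g ∈ H j := by
      intro j
      have h2 : ((g⁻¹ * 1 : G) : G ⧸ H j) = ((1 : G) : G ⧸ H j) := hfix j ((1 : G) : G ⧸ H j)
      rw [QuotientGroup.eq] at h2
      simpa using h2
    have hpure : pure g ≤ 𝓝 (1 : G) := by
      intro s hs
      obtain ⟨j, -, hj⟩ := hB.mem_iff.1 hs
      exact hj (hHsub j (hmem j))
    exact (specializes_iff_pure.2 hpure).eq
  -- the map into C(Cantor, Cantor) is inducing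
  have hind : IsInducing (fun g : G =>
      (⟨⇑(φ g), (φ g).continuous⟩ : C(CantorSpace, CantorSpace))) := by
    refine isInducing_iff_nhds.2 fun g =>
      le_antisymm (Filter.tendsto_iff_comap.1 (hψcont.tendsto g)) ?_
    intro N hN
    rw [Filter.mem_comap]
    have hpre : (fun x : G => g * x) ⁻¹' N ∈ 𝓝 (1 : G) := by
      have hmul : Continuous fun x : G => g * x := continuous_const.mul continuous_id
      have ht : Filter.Tendsto (fun x : G => g * x) (𝓝 1) (𝓝 g) := by
        have h := hmul.tendsto (1 : G)
        simpa using h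
      exact ht hN
    obtain ⟨j, -, hj⟩ := hB.mem_iff.1 hpre
    have hsymm : e.symm (e ⟨j, g • ((1 : G) : G ⧸ H j)⟩) = ⟨j, g • ((1 : G) : G ⧸ H j)⟩ :=
      e.symm_apply_apply _
    refine ⟨(fun F : C(CantorSpace, CantorSpace) =>
        F (fun n => decide (n = e ⟨j, ((1 : G) : G ⧸ H j)⟩))
          (e ⟨j, g • ((1 : G) : G ⧸ H j)⟩)) ⁻¹' {true}, ?_, ?_⟩
    · refine IsOpen.mem_nhds ?_ ?_
      · exact (isOpen_discrete _).preimage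
          ((continuous_apply _).comp (continuous_eval_const _))
      · show (φ g) (fun n => decide (n = e ⟨j, ((1 : G) : G ⧸ H j)⟩))
            (e ⟨j, g • ((1 : G) : G ⧸ H j)⟩) ∈ ({true} : Set Bool)
        rw [key, hsymm]
        simp
    · intro h hh
      have hh' : (φ h) (fun n => decide (n = e ⟨j, ((1 : G) : G ⧸ H j)⟩))
          (e ⟨j, g • ((1 : G) : G ⧸ H j)⟩) = true := hh
      rw [key, hsymm] at hh'
      have h2 : e ⟨j, h⁻¹ • g • ((1 : G) : G ⧸ H j)⟩ = e ⟨j, ((1 : G) : G ⧸ H j)⟩ := by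
        simpa using hh'
      have h3 := e.injective h2
      rw [Sigma.mk.inj_iff] at h3
      have h4' := eq_of_heq h3.2
      have h4 : ((h⁻¹ * g : G) : G ⧸ H j) = ((1 : G) : G ⧸ H j) := by
        simpa [mul_one] using h4'
      rw [QuotientGroup.eq] at h4
      have h5 : g⁻¹ * h ∈ H j := by
        have hmem : (h⁻¹ * g)⁻¹ * 1 ∈ H j := h4
        simpa [mul_inv_rev] using hmem
      have h6 : g⁻¹ * h ∈ (fun x : G => g * x) ⁻¹' N := hj (hHsub j h5)
      simpa using h6
  refine ⟨φ, hinj, ?_, hinj⟩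
  constructor
  rw [hind.eq_induced]
  have hcomp : (ContinuousMap.compactOpen.induced
      (fun f : CantorSpace ≃ₜ CantorSpace =>
        (⟨⇑f, f.continuous⟩ : C(CantorSpace, CantorSpace)))).induced ⇑φ
      = ContinuousMap.compactOpen.induced
        ((fun f : CantorSpace ≃ₜ CantorSpace =>
          (⟨⇑f, f.continuous⟩ : C(CantorSpace, CantorSpace))) ∘ ⇑φ) :=
    induced_compose
  exact hcomp.symm

end Forward

end Stmt8

/-- A Polish group `G` is non-archimedean (it has a neighbourhood base at the
identity consisting of open subgroups) iff there exists an injective group homomorphism from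
`G` into the group `Homeo({0,1}^ℕ)` of self-homeomorphisms of the Cantor space, equipped with
the compact-open topology, which is a homeomorphism onto its image (i.e. a topological
embedding). -/
theorem stmt_8 (G : Type) [Group G] [TopologicalSpace G] [IsTopologicalGroup G] [PolishSpace G] :
    letI : TopologicalSpace (CantorSpace ≃ₜ CantorSpace) :=
      TopologicalSpace.induced
        (fun f : CantorSpace ≃ₜ CantorSpace => (⟨⇑f, f.continuous⟩ : C(CantorSpace, CantorSpace)))
        ContinuousMap.compactOpen
    ((∀ U ∈ nhds (1 : G), ∃ H : Subgroup G, IsOpen (H : Set G) ∧ (H : Set G) ⊆ U) ↔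
      ∃ φ : G →* (CantorSpace ≃ₜ CantorSpace),
        Function.Injective ⇑φ ∧ Topology.IsEmbedding ⇑φ) := by
  letI τ : TopologicalSpace (CantorSpace ≃ₜ CantorSpace) := Stmt8.tH
  show (∀ U ∈ nhds (1 : G), ∃ H : Subgroup G, IsOpen (H : Set G) ∧ (H : Set G) ⊆ U) ↔
      ∃ φ : G →* (CantorSpace ≃ₜ CantorSpace),
        Function.Injective ⇑φ ∧ Topology.IsEmbedding ⇑φ
  haveI : T1Space G := inferInstance
  constructor
  · intro hNA
    obtain ⟨B, hB⟩ := (𝓝 (1 : G)).exists_antitone_basis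
    choose H hHopen hHsub using fun j => hNA (B j) (hB.toHasBasis.mem_of_mem trivial)
    haveI hcq : ∀ j, Countable (G ⧸ H j) := by
      intro j
      obtain ⟨D, hDc, hDd⟩ := TopologicalSpace.exists_countable_dense G
      haveI := hDc.to_subtype
      have hsurj : Function.Surjective (fun d : D => ((d : G) : G ⧸ H j)) := by
        intro q
        refine QuotientGroup.induction_on q fun a => ?_
        have hopen : IsOpen {x : G | ((x : G) : G ⧸ H j) = (a : G ⧸ H j)} := by
          have hset : {x : G | ((x : G) : G ⧸ H j) = (a : G ⧸ H j)}
              = (fun x : G => x⁻¹ * a) ⁻¹' (H j : Set G) := by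
            ext x
            rw [Set.mem_setOf_eq, QuotientGroup.eq]
            rfl
          rw [hset]
          exact (hHopen j).preimage (by fun_prop)
        obtain ⟨d, hdD, hd⟩ := hDd.exists_mem_open hopen ⟨a, rfl⟩
        exact ⟨⟨d, hdD⟩, hd⟩
      exact hsurj.countable
    haveI : Countable (Σ j : ℕ, G ⧸ H j) := inferInstance
    haveI : Infinite (Σ j : ℕ, G ⧸ H j) :=
      Infinite.of_injective (fun j : ℕ => (⟨j, ((1 : G) : G ⧸ H j)⟩ : Σ j : ℕ, G ⧸ H j))
        fun a b h => congrArg Sigma.fst h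
    haveI := (nonempty_denumerable (Σ j : ℕ, G ⧸ H j)).some
    exact Stmt8.forward B hB.toHasBasis H hHopen hHsub (Denumerable.eqv _)
  · rintro ⟨φ, _, hemb⟩
    exact Stmt8.backward φ hemb
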